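/- Write P_Γ(z, w) = A(z)w² + B(z)w + C(z) as a quadratic in w, where A(z) = (z−t)², B(z) = −2t z² + 2(2(λ+1)t − t² − λ) z − 2λt, and C(z) = t²z² − 2λt z + λ². Then the discriminant satisfies the polynomial identity B(z)² − 4A(z)C(z) = 16 t (t−1)(t−λ) · z (z−1)(z−λ) in ℂ[z]. Consequently, for z₀ ∈ ℂ with z₀ ≠ t, the vertical line z = z₀ is tangent to Γ (i.e. P_Γ(z₀, w) has a double root in w) if and only if z₀ ∈ {0, 1, λ}. -/
import Mathlib


/-- The bidegree `(2,2)` polynomial `P_Γ(z, w)` defining the curve `Γ ⊂ ℙ¹×ℙ¹`. -/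
noncomputable def PGamma (l t z w : ℂ) : ℂ :=
  t ^ 2 * z ^ 2 - 2 * t * z ^ 2 * w + t ^ 2 * w ^ 2 - 2 * t * z * w ^ 2 + z ^ 2 * w ^ 2
    - 2 * l * t * z - 2 * l * t * w + 2 * (2 * (l + 1) * t - t ^ 2 - l) * z * w + l ^ 2

/-- Writing `P_Γ(z, w) = A(z)w² + B(z)w + C(z)` with `A(z) = (z−t)²`,
`B(z) = −2tz² + 2(2(λ+1)t − t² − λ)z − 2λt` and `C(z) = t²z² − 2λtz + λ²`, the discriminant
satisfies `B(z)² − 4A(z)C(z) = 16t(t−1)(t−λ)·z(z−1)(z−λ)` in `ℂ[z]`. Consequently, for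
`z₀ ∈ ℂ` with `z₀ ≠ t`, the vertical line `z = z₀` is tangent to `Γ` (i.e. `P_Γ(z₀, w)` has a
double root in `w`) if and only if `z₀ ∈ {0, 1, λ}`. -/
theorem discriminant_and_vertical_tangents (l t : ℂ) (hl0 : l ≠ 0) (hl1 : l ≠ 1)
    (ht0 : t ≠ 0) (ht1 : t ≠ 1) (htl : t ≠ l) :
    (∀ z : ℂ,
      (-2 * t * z ^ 2 + 2 * (2 * (l + 1) * t - t ^ 2 - l) * z - 2 * l * t) ^ 2
          - 4 * (z - t) ^ 2 * (t ^ 2 * z ^ 2 - 2 * l * t * z + l ^ 2) =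
        16 * t * (t - 1) * (t - l) * (z * (z - 1) * (z - l))) ∧
    ∀ z₀ : ℂ, z₀ ≠ t →
      ((∃ w₀ : ℂ, ∀ w : ℂ, PGamma l t z₀ w = (z₀ - t) ^ 2 * (w - w₀) ^ 2) ↔
        z₀ ∈ ({0, 1, l} : Set ℂ)) := by
  have hdisc : ∀ z : ℂ,
      (-2 * t * z ^ 2 + 2 * (2 * (l + 1) * t - t ^ 2 - l) * z - 2 * l * t) ^ 2
          - 4 * (z - t) ^ 2 * (t ^ 2 * z ^ 2 - 2 * l * t * z + l ^ 2) =
        16 * t * (t - 1) * (t - l) * (z * (z - 1) * (z - l)) := by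
    intro z; ring
  refine ⟨hdisc, fun z₀ hz₀ => ?_⟩
  have hA : (z₀ - t) ^ 2 ≠ 0 := pow_ne_zero _ (sub_ne_zero.mpr hz₀)
  set A : ℂ := (z₀ - t) ^ 2 with hAdef
  set B : ℂ := -2 * t * z₀ ^ 2 + 2 * (2 * (l + 1) * t - t ^ 2 - l) * z₀ - 2 * l * t with hBdef
  set C : ℂ := t ^ 2 * z₀ ^ 2 - 2 * l * t * z₀ + l ^ 2 with hCdef
  have hP : ∀ w : ℂ, PGamma l t z₀ w = A * w ^ 2 + B * w + C := by
    intro w; simp only [PGamma, hAdef, hBdef, hCdef]; ring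
  have hcoef : (16 : ℂ) * t * (t - 1) * (t - l) ≠ 0 := by
    exact mul_ne_zero (mul_ne_zero (mul_ne_zero (by norm_num) ht0)
      (sub_ne_zero.mpr ht1)) (sub_ne_zero.mpr htl)
  constructor
  · rintro ⟨w₀, hw⟩
    have h1 := hw w₀
    have h2 := hw (w₀ + 1)
    have h3 := hw (w₀ - 1)
    rw [hP] at h1 h2 h3
    have hB : B = -2 * A * w₀ := by linear_combination (h2 - h3) / 2
    have hC : C = A * w₀ ^ 2 := by linear_combination h1 - w₀ * hB
    have hz : 16 * t * (t - 1) * (t - l) * (z₀ * (z₀ - 1) * (z₀ - l)) = 0 := by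
      rw [← hdisc z₀, ← hBdef, ← hCdef, ← hAdef, hB, hC]; ring
    have hz' : z₀ * (z₀ - 1) * (z₀ - l) = 0 := by
      rcases mul_eq_zero.mp hz with h | h
      · exact absurd h hcoef
      · exact h
    rcases mul_eq_zero.mp hz' with h | h
    · rcases mul_eq_zero.mp h with h | h
      · left; exact h
      · right; left; exact sub_eq_zero.mp h
    · right; right; exact sub_eq_zero.mp h
  · intro hz
    have hz' : z₀ * (z₀ - 1) * (z₀ - l) = 0 := by
      rcases hz with h | h | h
      · simp [h]
      · simp [h]
      · simp [Set.mem_singleton_iff.mp h]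
    have hD : B ^ 2 - 4 * A * C = 0 := by
      rw [hAdef, hBdef, hCdef, hdisc z₀, hz', mul_zero]
    refine ⟨-B / (2 * A), fun w => ?_⟩
    rw [hP]
    have hCeq : C = B ^ 2 / (4 * A) := by
      rw [eq_div_iff (by simp [hA])]
      linear_combination -hD
    rw [hCeq, hAdef]
    field_simp
    ring
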